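/- arXiv:1704.07723 — 4 statements merged into one kernel-verified Lean document; each statement's English description precedes it below -/
import Mathlib

section
/- For an infinite hypernatural n, the hyperreal (1 - 1/n)^n is infinitely close to 1/e and is not infinitesimal. -/
open Filter Germ Topology

theorem aux_isSt (n : Germ (hyperfilter ℕ : Filter ℕ) ℕ)
    (hn : ∀ m : ℕ, (m : Germ (hyperfilter ℕ : Filter ℕ) ℕ) < n) :
    Hyperreal.IsSt
      (Germ.map₂ (fun (k : ℕ) (x : ℝ) => (1 - x) ^ k) n (n.map fun k : ℕ => 1 / (k:ℝ)) : ℝ*)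
      ((Real.exp 1)⁻¹) := by
  have hlim : Tendsto (fun k : ℕ => (1 - 1/(k:ℝ)) ^ k) atTop (𝓝 ((Real.exp 1)⁻¹)) := by
    have := Real.tendsto_one_add_div_pow_exp (-1)
    rw [Real.exp_neg] at this
    refine this.congr fun k => by ring_nf
  refine Hyperreal.isSt_iff_abs_sub_lt_delta.2 ?_
  intro δ hδ
  obtain ⟨N, hN⟩ := (Metric.tendsto_atTop.1 hlim) δ hδ
  induction n using Germ.inductionOn with
  | h m =>
    have hm : ∀ᶠ i in (hyperfilter ℕ : Filter ℕ), N < m i :=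
      Germ.coe_lt.1 (show (↑(fun _ : ℕ => N) : Germ (hyperfilter ℕ : Filter ℕ) ℕ) < ↑m from hn N)
    have : ∀ᶠ i in (hyperfilter ℕ : Filter ℕ),
        |(1 - 1/((m i):ℝ)) ^ (m i) - (Real.exp 1)⁻¹| < δ := by
      filter_upwards [hm] with i hi
      simpa [Real.dist_eq] using hN (m i) (le_of_lt hi)
    exact (Germ.coe_lt).2 this

/-- For an infinite hypernatural `n`, the hyperreal `(1 - 1/n)^n` (interpreted via the
ultrapower extension of `(k, x) ↦ (1-x)^k`) is infinitely close to `1/e` and is not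
infinitesimal. -/
theorem one_sub_inv_pow_infinite_index (n : Germ (hyperfilter ℕ : Filter ℕ) ℕ)
    (hn : ∀ m : ℕ, (m : Germ (hyperfilter ℕ : Filter ℕ) ℕ) < n) :
    Hyperreal.Infinitesimal
      ((Germ.map₂ (fun (k : ℕ) (x : ℝ) => (1 - x) ^ k) n (n.map fun k : ℕ => 1 / (k:ℝ)) : ℝ*) -
        (↑((Real.exp 1)⁻¹ : ℝ) : Germ (hyperfilter ℕ : Filter ℕ) ℝ)) ∧
    ¬ Hyperreal.Infinitesimal
      (Germ.map₂ (fun (k : ℕ) (x : ℝ) => (1 - x) ^ k) n (n.map fun k : ℕ => 1 / (k:ℝ))) := by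
  have h := aux_isSt n hn
  constructor
  · have := h.sub (Hyperreal.isSt_refl_real ((Real.exp 1)⁻¹))
    rw [sub_self] at this
    exact this
  · intro h0
    have := (Hyperreal.IsSt.unique h h0)
    exact (inv_ne_zero (Real.exp_ne_zero 1)) this
end

section
/- For every x in the open interval (0, 2π), the series Σ_{k=1}^∞ sin(k x)/k converges to (π - x)/2. -/
open Filter Topology

/-- For `0 < x < 2π`, the sawtooth series `Σ_{k=1}^∞ sin(kx)/k` converges to `(π - x)/2`. -/
theorem sawtooth_series_sum (x : ℝ) (h0 : 0 < x) (h2 : x < 2 * Real.pi) :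
    Tendsto (fun n : ℕ => ∑ k ∈ Finset.Icc 1 n, Real.sin ((k : ℝ) * x) / (k : ℝ))
      atTop (nhds ((Real.pi - x) / 2)) := by
  have hpi := Real.pi_pos
  set z₀ : ℂ := Complex.exp (x * Complex.I) with hz₀def
  have hz₀norm : ‖z₀‖ = 1 := by
    rw [hz₀def]
    exact Complex.norm_exp_ofReal_mul_I x
  have hz₀ne : z₀ ≠ 1 := by
    intro h
    rw [hz₀def, Complex.exp_eq_one_iff] at h
    obtain ⟨n, hn⟩ := h
    have hx : (x : ℂ) = n * (2 * Real.pi) := by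
      rw [show ((n : ℂ) * (2 * (Real.pi : ℂ) * Complex.I))
          = ((n : ℂ) * (2 * (Real.pi : ℂ))) * Complex.I by ring] at hn
      exact mul_right_cancel₀ Complex.I_ne_zero hn
    have hx' : x = n * (2 * Real.pi) := by exact_mod_cast hx
    rcases lt_trichotomy (n : ℝ) 0 with h | h | h
    · nlinarith
    · rw [h] at hx'; simp at hx'; linarith
    · have : (1 : ℝ) ≤ n := by exact_mod_cast (by exact_mod_cast h : (0:ℤ) < n)
      nlinarith
  have hz₀m1 : ‖(1 : ℂ) - z₀‖ ≠ 0 := by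
    simp only [ne_eq, norm_eq_zero, sub_eq_zero]
    exact fun h => hz₀ne h.symm
  have hz₀m1' : (0:ℝ) < ‖(1 : ℂ) - z₀‖ := lt_of_le_of_ne (norm_nonneg _) (Ne.symm hz₀m1)
  -- Step 1: Dirichlet's test gives convergence of the complex series
  have hbound : ∀ n : ℕ, ‖∑ i ∈ Finset.range n, z₀ ^ (i + 1)‖ ≤ 2 / ‖(1:ℂ) - z₀‖ := by
    intro n
    have : ∑ i ∈ Finset.range n, z₀ ^ (i + 1) = z₀ * ((z₀ ^ n - 1) / (z₀ - 1)) := by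
      rw [← geom_sum_eq hz₀ne]
      rw [Finset.mul_sum]
      congr 1; ext i; ring
    rw [this]
    rw [norm_mul, norm_div, hz₀norm, one_mul]
    rw [div_le_div_iff₀ (by rwa [norm_sub_rev] at hz₀m1') hz₀m1']
    rw [norm_sub_rev (1:ℂ) z₀]
    have : ‖z₀ ^ n - 1‖ ≤ 2 := by
      calc ‖z₀ ^ n - 1‖ ≤ ‖z₀ ^ n‖ + ‖(1:ℂ)‖ := norm_sub_le _ _
      _ = 2 := by rw [norm_pow, hz₀norm]; norm_num
    nlinarith [norm_nonneg (z₀ - 1)]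
  have hanti : Antitone (fun n : ℕ => 1 / ((n : ℝ) + 1)) := by
    intro a b hab
    apply one_div_le_one_div_of_le
    · positivity
    · exact_mod_cast by linarith [(Nat.cast_le (α := ℝ)).2 hab]
  have hf0 : Tendsto (fun n : ℕ => 1 / ((n : ℝ) + 1)) atTop (nhds 0) :=
    tendsto_one_div_add_atTop_nhds_zero_nat
  have hcauchy : CauchySeq fun n => ∑ i ∈ Finset.range n, (1 / ((i : ℝ) + 1)) • z₀ ^ (i + 1) :=
    hanti.cauchySeq_series_mul_of_tendsto_zero_of_bounded hf0 hbound
  obtain ⟨l, hl⟩ := cauchySeq_tendsto_of_complete hcauchy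
  -- Define the power series coefficients
  set g : ℕ → ℂ := fun n => if n = 0 then 0 else z₀ ^ n / n with hgdef
  have hsum_eq : ∀ n : ℕ, ∑ i ∈ Finset.range (n + 1), g i
      = ∑ i ∈ Finset.range n, (1 / ((i : ℝ) + 1)) • z₀ ^ (i + 1) := by
    intro n
    rw [Finset.sum_range_succ']
    simp only [hgdef, if_pos rfl, add_zero]
    refine Finset.sum_congr rfl fun i _ => ?_
    rw [if_neg (Nat.succ_ne_zero i), Complex.real_smul]
    push_cast
    ring
  have hg : Tendsto (fun n => ∑ i ∈ Finset.range n, g i) atTop (nhds l) := by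
    rw [← tendsto_add_atTop_iff_nat 1]
    simpa only [hsum_eq] using hl
  -- Step 2: Abel's limit theorem identifies l as the radial limit
  have habel := Complex.tendsto_tsum_powerSeries_nhdsWithin_lt hg
  rw [tendsto_map'_iff] at habel
  have hkey : ∀ᶠ r : ℝ in 𝓝[<] (1:ℝ),
      ((fun z : ℂ => ∑' n, g n * z ^ n) ∘ Complex.ofReal) r
        = -Complex.log (1 - z₀ * r) := by
    filter_upwards [Ioo_mem_nhdsLT_of_mem (by constructor <;> norm_num : (1:ℝ) ∈ Set.Ioc 0 1)]
      with r hr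
    have hr' : ‖z₀ * (r : ℂ)‖ < 1 := by
      rw [norm_mul, hz₀norm, one_mul, Complex.norm_real, Real.norm_eq_abs,
        abs_of_pos hr.1]
      exact hr.2
    have := (Complex.hasSum_taylorSeries_neg_log hr').tsum_eq
    rw [Function.comp_apply, ← this]
    congr 1
    ext n
    rcases Nat.eq_zero_or_pos n with rfl | hn
    · simp [hgdef]
    · simp only [hgdef, if_neg hn.ne', mul_pow]
      ring
  have habel' : Tendsto (fun r : ℝ => -Complex.log (1 - z₀ * r)) (𝓝[<] (1:ℝ)) (nhds l) :=
    habel.congr' hkey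
  -- continuity of the logarithm at 1 - z₀
  have hre : 0 < ((1 : ℂ) - z₀).re := by
    have hcos : Real.cos x < 1 := by
      rcases lt_or_eq_of_le (Real.cos_le_one x) with h | h
      · exact h
      · exfalso
        rw [Real.cos_eq_one_iff] at h
        obtain ⟨n, hn⟩ := h
        rcases lt_trichotomy (n : ℝ) 0 with hn' | hn' | hn'
        · nlinarith
        · rw [hn'] at hn; simp at hn; linarith
        · have : (1 : ℝ) ≤ n := by exact_mod_cast (by exact_mod_cast hn' : (0:ℤ) < n)
          nlinarith
    have : z₀.re = Real.cos x := by
      rw [hz₀def, Complex.exp_ofReal_mul_I_re]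
    simp [this]
    linarith
  have hlog_cont : Tendsto (fun r : ℝ => -Complex.log (1 - z₀ * r)) (𝓝[<] (1:ℝ))
      (nhds (-Complex.log (1 - z₀))) := by
    have h1 : Tendsto (fun r : ℝ => (1 : ℂ) - z₀ * r) (nhds 1) (nhds (1 - z₀)) := by
      have : Continuous (fun r : ℝ => (1 : ℂ) - z₀ * r) := by continuity
      simpa using this.tendsto 1
    have h2 : ContinuousAt Complex.log (1 - z₀) := continuousAt_clog (Complex.mem_slitPlane_iff.2 (Or.inl hre))
    exact ((h2.tendsto.comp h1).neg).mono_left nhdsWithin_le_nhds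
  have hlval : l = -Complex.log (1 - z₀) :=
    tendsto_nhds_unique habel' hlog_cont
  -- Step 3: compute the argument of 1 - z₀
  have hsin : 0 < Real.sin (x / 2) :=
    Real.sin_pos_of_pos_of_lt_pi (by linarith) (by linarith)
  have hfactor : (1 : ℂ) - z₀ = ((2 * Real.sin (x / 2) : ℝ) : ℂ) *
      (Complex.cos (((x - Real.pi) / 2 : ℝ) : ℂ)
        + Complex.sin (((x - Real.pi) / 2 : ℝ) : ℂ) * Complex.I) := by
    have hc : Real.cos ((x - Real.pi) / 2) = Real.sin (x / 2) := by
      rw [show (x - Real.pi) / 2 = x / 2 - Real.pi / 2 by ring, Real.cos_sub_pi_div_two]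
    have hs : Real.sin ((x - Real.pi) / 2) = -Real.cos (x / 2) := by
      rw [show (x - Real.pi) / 2 = x / 2 - Real.pi / 2 by ring, Real.sin_sub_pi_div_two]
    have hcosx : Real.cos x = 1 - 2 * Real.sin (x / 2) ^ 2 := by
      have h1 := Real.cos_two_mul' (x / 2)
      have h2 := Real.sin_sq_add_cos_sq (x / 2)
      rw [show 2 * (x / 2) = x by ring] at h1
      nlinarith
    have hsinx : Real.sin x = 2 * Real.sin (x / 2) * Real.cos (x / 2) := by
      have h1 := Real.sin_two_mul (x / 2)
      rw [show 2 * (x / 2) = x by ring] at h1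
      linarith
    rw [hz₀def, Complex.exp_mul_I, ← Complex.ofReal_cos, ← Complex.ofReal_sin,
      ← Complex.ofReal_cos, ← Complex.ofReal_sin, hc, hs, hcosx, hsinx]
    push_cast
    ring
  have harg : Complex.arg (1 - z₀) = (x - Real.pi) / 2 := by
    rw [hfactor]
    exact Complex.arg_mul_cos_add_sin_mul_I
      (by positivity : (0:ℝ) < 2 * Real.sin (x / 2)) ⟨by linarith, by linarith⟩
  have hlim : l.im = (Real.pi - x) / 2 := by
    rw [hlval, Complex.neg_im, Complex.log_im, harg]
    ring
  -- Step 4: take imaginary parts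
  have hIm : ∀ n : ℕ, (∑ i ∈ Finset.range (n + 1), g i).im
      = ∑ k ∈ Finset.Icc 1 n, Real.sin ((k : ℝ) * x) / (k : ℝ) := by
    intro n
    rw [Finset.sum_range_succ', show g 0 = 0 by simp [hgdef], add_zero, Complex.im_sum]
    rw [show Finset.Icc 1 n = Finset.Ico 1 (n + 1) by rw [Finset.Ico_add_one_right_eq_Icc],
      Finset.sum_Ico_eq_sum_range]
    simp only [hgdef, if_pos rfl, Complex.zero_im, add_zero, Nat.add_sub_cancel]
    refine Finset.sum_congr rfl fun i _ => ?_
    rw [if_neg (Nat.succ_ne_zero i)]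
    have hz : z₀ ^ (i + 1) = Complex.exp ((((i + 1 : ℕ) : ℝ) * x : ℝ) * Complex.I) := by
      rw [hz₀def, ← Complex.exp_nat_mul]
      push_cast
      ring_nf
    rw [hz, Complex.div_natCast_im, Complex.exp_ofReal_mul_I_im]
    norm_num [add_comm 1 i]
  have him : Tendsto (fun n => (∑ i ∈ Finset.range (n + 1), g i).im) atTop
      (nhds ((Real.pi - x) / 2)) := by
    rw [← hlim]
    exact ((Complex.continuous_im.tendsto l).comp hg).comp (tendsto_add_atTop_nat 1)
  exact him.congr hIm
end

section
/- Hyperreal sum theorem: if u_k : ℝ → ℝ are continuous on [a,b], and for all infinite hypernaturals n' > n and all hyperreal x in *[a,b] the hyperfinite sum Σ_{k=n}^{n'-1} u*_k(x) is infinitesimal, then Σ u_k converges uniformly on [a,b] and its sum is continuous on [a,b]. -/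
open Filter Germ Topology

/-- Hyperreal sum theorem: if each `u k` is continuous on `[a,b]` and for all infinite
hypernaturals `n' > n` and all hyperreal `x` in `*[a,b]` the hyperfinite sum
`Σ_{k=n}^{n'-1} u*_k(x) = s*_{n'}(x) - s*_n(x)` is infinitesimal, then the partial sums
converge uniformly on `[a,b]` to a limit which is continuous on `[a,b]`. -/
theorem hyperreal_sum_theorem (u : ℕ → ℝ → ℝ) (a b : ℝ)
    (hcont : ∀ k, ContinuousOn (u k) (Set.Icc a b))
    (hyp : ∀ n n' : Germ (hyperfilter ℕ : Filter ℕ) ℕ,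
      (∀ m : ℕ, (m : Germ (hyperfilter ℕ : Filter ℕ) ℕ) < n) →
      (∀ m : ℕ, (m : Germ (hyperfilter ℕ : Filter ℕ) ℕ) < n') →
      n < n' →
      ∀ x : ℝ*, x.LiftPred (· ∈ Set.Icc a b) →
        Hyperreal.Infinitesimal
          (Germ.map₂ (fun (m : ℕ) (y : ℝ) => ∑ k ∈ Finset.range m, u k y) n' x -
            Germ.map₂ (fun (m : ℕ) (y : ℝ) => ∑ k ∈ Finset.range m, u k y) n x)) :
    ∃ s : ℝ → ℝ,
      TendstoUniformlyOn (fun (m : ℕ) (y : ℝ) => ∑ k ∈ Finset.range m, u k y) s atTop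
        (Set.Icc a b) ∧
      ContinuousOn s (Set.Icc a b) := by
  set F : ℕ → ℝ → ℝ := fun m y => ∑ k ∈ Finset.range m, u k y with hF
  -- Step 1: uniform Cauchy
  have key : ∀ ε : ℝ, 0 < ε → ∃ N : ℕ, ∀ n n' : ℕ, N ≤ n → n < n' →
      ∀ x ∈ Set.Icc a b, |F n' x - F n x| < ε := by
    by_contra h
    push_neg at h
    obtain ⟨ε, hε, h⟩ := h
    choose n n' hNn hnn' x hx hεle using h
    have hninf : ∀ m : ℕ, (m : Germ (hyperfilter ℕ : Filter ℕ) ℕ) < (n : Germ _ ℕ) := by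
      intro m
      rw [← Germ.natCast_def m, Germ.coe_lt]
      refine mem_hyperfilter_of_finite_compl ?_
      apply Set.Finite.subset (Set.finite_Iic m)
      intro N hN
      simp only [Set.mem_compl_iff, Set.mem_setOf_eq, not_lt] at hN
      exact le_trans (hNn N) hN
    have hn'inf : ∀ m : ℕ, (m : Germ (hyperfilter ℕ : Filter ℕ) ℕ) < (n' : Germ _ ℕ) := by
      intro m
      exact lt_trans (hninf m) (Germ.coe_lt.mpr (Eventually.of_forall hnn'))
    have hlt : (n : Germ (hyperfilter ℕ : Filter ℕ) ℕ) < (n' : Germ _ ℕ) :=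
      Germ.coe_lt.mpr (Eventually.of_forall hnn')
    have hxmem : (Germ.ofFun x : ℝ*).LiftPred (· ∈ Set.Icc a b) :=
      Germ.liftPred_coe.mpr (Eventually.of_forall hx)
    have hinf := hyp (↑n) (↑n') hninf hn'inf hlt (Germ.ofFun x) hxmem
    replace hinf := Hyperreal.infinitesimal_def.mp hinf
    obtain ⟨h1, h2⟩ := hinf ε hε
    rw [Germ.map₂_coe, Germ.map₂_coe] at h1 h2
    have h1' : ∀ᶠ N in (hyperfilter ℕ : Filter ℕ),
        -ε < F (n' N) (x N) - F (n N) (x N) :=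
      Germ.coe_lt.mp (show (Germ.ofFun (fun _ => -ε) :
          Germ (hyperfilter ℕ : Filter ℕ) ℝ) <
          Germ.ofFun (fun N => F (n' N) (x N) - F (n N) (x N)) from h1)
    have h2' : ∀ᶠ N in (hyperfilter ℕ : Filter ℕ),
        F (n' N) (x N) - F (n N) (x N) < ε :=
      Germ.coe_lt.mp (show (Germ.ofFun (fun N => F (n' N) (x N) - F (n N) (x N)) :
          Germ (hyperfilter ℕ : Filter ℕ) ℝ) <
          Germ.ofFun (fun _ => ε) from h2)
    have : ∀ᶠ N in (hyperfilter ℕ : Filter ℕ),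
        |F (n' N) (x N) - F (n N) (x N)| < ε := by
      filter_upwards [h1', h2'] with N hN1 hN2
      exact abs_lt.mpr ⟨hN1, hN2⟩
    rcases this.exists with ⟨N, hNlt⟩
    exact absurd (hεle N) (not_le.mpr hNlt)
  have hcauchy : UniformCauchySeqOn F atTop (Set.Icc a b) := by
    rw [Metric.uniformCauchySeqOn_iff]
    intro ε hε
    obtain ⟨N, hN⟩ := key ε hε
    refine ⟨N, fun m hm k hk x hx => ?_⟩
    rcases lt_trichotomy m k with h | h | h
    · rw [Real.dist_eq, abs_sub_comm]
      exact hN m k hm h x hx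
    · simp [h, hε]
    · rw [Real.dist_eq]
      exact hN k m hk h x hx
  -- Step 2: pointwise limit
  set s : ℝ → ℝ := fun x => limUnder atTop (fun m => F m x) with hs
  have htend : ∀ x ∈ Set.Icc a b, Tendsto (fun m => F m x) atTop (𝓝 (s x)) := by
    intro x hx
    have : CauchySeq (fun m => F m x) := by
      rw [Metric.cauchySeq_iff]
      intro ε hε
      obtain ⟨N, hN⟩ := key ε hε
      refine ⟨N, fun m hm k hk => ?_⟩
      rcases lt_trichotomy m k with h | h | h
      · rw [Real.dist_eq, abs_sub_comm]; exact hN m k hm h x hx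
      · simp [h, hε]
      · rw [Real.dist_eq]; exact hN k m hk h x hx
    exact this.tendsto_limUnder
  have huniform : TendstoUniformlyOn F s atTop (Set.Icc a b) :=
    hcauchy.tendstoUniformlyOn_of_tendsto htend
  refine ⟨s, huniform, ?_⟩
  exact huniform.continuousOn (Eventually.frequently (Eventually.of_forall fun m =>
    continuousOn_finset_sum _ fun k _ => hcont k))
end

section
/- A series of real functions Σ u_k converges uniformly on B ⊆ ℝ if and only if for all infinite hypernaturals n < n' and all hyperreal x in the extension *B, the difference s*_{n'}(x) - s*_n(x) of extended partial sums is infinitesimal. -/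
open Filter Germ Topology

private lemma hyp_coe_lt {f g : ℕ → ℝ}
    (h : ∀ᶠ i in (hyperfilter ℕ : Filter ℕ), f i < g i) :
    (Germ.ofFun f : ℝ*) < Germ.ofFun g :=
  Germ.coe_lt.mpr h

private lemma hyp_coe_lt_nat {f g : ℕ → ℕ}
    (h : ∀ᶠ i in (hyperfilter ℕ : Filter ℕ), f i < g i) :
    (Germ.ofFun f : Germ (hyperfilter ℕ : Filter ℕ) ℕ) < Germ.ofFun g :=
  Germ.coe_lt.mpr h

private lemma hyp_lt_iff {f g : ℕ → ℝ} :
    (Germ.ofFun f : ℝ*) < Germ.ofFun g ↔ ∀ᶠ i in (hyperfilter ℕ : Filter ℕ), f i < g i :=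
  Germ.coe_lt

private lemma hyp_lt_iff_nat {f g : ℕ → ℕ} :
    (Germ.ofFun f : Germ (hyperfilter ℕ : Filter ℕ) ℕ) < Germ.ofFun g ↔
      ∀ᶠ i in (hyperfilter ℕ : Filter ℕ), f i < g i :=
  Germ.coe_lt

/-- A series of real functions converges uniformly on `B` (i.e. its partial sums are
uniformly Cauchy on `B`) iff for all infinite hypernaturals `n < n'` and all hyperreal
`x ∈ *B`, the difference `s*_{n'}(x) - s*_n(x)` of the extended partial sums is
infinitesimal. -/
theorem uniform_cauchy_iff_hyperreal (u : ℕ → ℝ → ℝ) (B : Set ℝ) :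
    (∀ ε : ℝ, 0 < ε → ∃ N : ℕ, ∀ n n' : ℕ, N < n → N < n' → ∀ x ∈ B,
      |(∑ k ∈ Finset.range n', u k x) - ∑ k ∈ Finset.range n, u k x| < ε) ↔
    (∀ n n' : Germ (hyperfilter ℕ : Filter ℕ) ℕ,
      (∀ m : ℕ, (m : Germ (hyperfilter ℕ : Filter ℕ) ℕ) < n) →
      (∀ m : ℕ, (m : Germ (hyperfilter ℕ : Filter ℕ) ℕ) < n') →
      n < n' →
      ∀ x : ℝ*, x.LiftPred (· ∈ B) →
        Hyperreal.Infinitesimal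
          (Germ.map₂ (fun (m : ℕ) (y : ℝ) => ∑ k ∈ Finset.range m, u k y) n' x -
            Germ.map₂ (fun (m : ℕ) (y : ℝ) => ∑ k ∈ Finset.range m, u k y) n x)) := by
  set s : ℕ → ℝ → ℝ := fun m y => ∑ k ∈ Finset.range m, u k y with hs
  constructor
  · intro h n n' hn hn' _ x hx
    induction n using Germ.inductionOn with | h f =>
    induction n' using Germ.inductionOn with | h g =>
    induction x using Germ.inductionOn with | h xf =>
    refine Hyperreal.infinitesimal_def.mpr ?_
    intro ε hε
    obtain ⟨N, hN⟩ := h ε hε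
    have h1 : ∀ᶠ i in (hyperfilter ℕ : Filter ℕ), N < f i := by
      have : (Germ.ofFun (fun _ => N) : Germ (hyperfilter ℕ : Filter ℕ) ℕ) < Germ.ofFun f :=
        hn N
      exact hyp_lt_iff_nat.mp this
    have h2 : ∀ᶠ i in (hyperfilter ℕ : Filter ℕ), N < g i := by
      have : (Germ.ofFun (fun _ => N) : Germ (hyperfilter ℕ : Filter ℕ) ℕ) < Germ.ofFun g :=
        hn' N
      exact hyp_lt_iff_nat.mp this
    have h3 : ∀ᶠ i in (hyperfilter ℕ : Filter ℕ), xf i ∈ B := hx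
    have key : ∀ᶠ i in (hyperfilter ℕ : Filter ℕ),
        |s (g i) (xf i) - s (f i) (xf i)| < ε := by
      filter_upwards [h1, h2, h3] with i hi1 hi2 hi3
      exact hN (f i) (g i) hi1 hi2 (xf i) hi3
    constructor
    · show (Germ.ofFun (fun _ => -ε) : ℝ*) <
        Germ.ofFun (fun i => s (g i) (xf i) - s (f i) (xf i))
      apply hyp_coe_lt
      filter_upwards [key] with i hi
      have := (abs_lt.mp hi).1; linarith
    · show (Germ.ofFun (fun i => s (g i) (xf i) - s (f i) (xf i)) : ℝ*) <
        Germ.ofFun (fun _ => ε)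
      apply hyp_coe_lt
      filter_upwards [key] with i hi
      exact (abs_lt.mp hi).2
  · intro h
    by_contra hcon
    push_neg at hcon
    obtain ⟨ε, hε, hbad⟩ := hcon
    choose f g hf hg x hxB hge using hbad
    set a : ℕ → ℕ := fun i => min (f i) (g i) with ha
    set b : ℕ → ℕ := fun i => max (f i) (g i) with hb
    have hfg : ∀ i, f i ≠ g i := by
      intro i hEq
      have := hge i
      rw [hEq, sub_self, abs_zero] at this
      linarith
    have hinf : ∀ m : ℕ, (m : Germ (hyperfilter ℕ : Filter ℕ) ℕ) < Germ.ofFun a := by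
      intro m
      show (Germ.ofFun (fun _ => m) : Germ (hyperfilter ℕ : Filter ℕ) ℕ) < Germ.ofFun a
      apply hyp_coe_lt_nat
      apply Filter.Eventually.filter_mono (Filter.hyperfilter_le_cofinite)
      rw [Filter.eventually_cofinite]
      apply Set.Finite.subset (Set.finite_Iic m)
      intro i hi
      simp only [Set.mem_setOf_eq, not_lt] at hi
      have h1 := hf i
      have h2 := hg i
      have h3 : i < a i := lt_min h1 h2
      simp only [Set.mem_Iic]
      omega
    have hinf' : ∀ m : ℕ, (m : Germ (hyperfilter ℕ : Filter ℕ) ℕ) < Germ.ofFun b := by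
      intro m
      refine lt_of_lt_of_le (hinf m) ?_
      rw [Germ.coe_le]
      exact Filter.Eventually.of_forall fun i => min_le_max
    have hab : (Germ.ofFun a : Germ (hyperfilter ℕ : Filter ℕ) ℕ) < Germ.ofFun b :=
      hyp_coe_lt_nat (Filter.Eventually.of_forall fun i => min_lt_max.mpr (hfg i))
    have hxlift : (Germ.ofFun x : ℝ*).LiftPred (· ∈ B) :=
      Filter.Eventually.of_forall hxB
    have hmain := h (Germ.ofFun a) (Germ.ofFun b) hinf hinf' hab (Germ.ofFun x) hxlift
    replace hmain := Hyperreal.infinitesimal_def.mp hmain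
    obtain ⟨hlo, hhi⟩ := hmain ε hε
    have habs : ∀ i, |s (b i) (x i) - s (a i) (x i)| = |s (g i) (x i) - s (f i) (x i)| := by
      intro i
      rcases le_total (f i) (g i) with hle | hle
      · rw [show a i = f i from min_eq_left hle, show b i = g i from max_eq_right hle]
      · rw [show a i = g i from min_eq_right hle, show b i = f i from max_eq_left hle,
          abs_sub_comm]
    have hU : ∀ᶠ i in (hyperfilter ℕ : Filter ℕ),
        ε ≤ |s (b i) (x i) - s (a i) (x i)| := by
      apply Filter.Eventually.of_forall
      intro i
      rw [habs i]
      exact hge i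
    have hor : (∀ᶠ i in (hyperfilter ℕ : Filter ℕ), ε ≤ s (b i) (x i) - s (a i) (x i)) ∨
        (∀ᶠ i in (hyperfilter ℕ : Filter ℕ), s (b i) (x i) - s (a i) (x i) ≤ -ε) := by
      apply Ultrafilter.eventually_or.mp
      apply hU.mono
      intro i hi
      rcases le_abs.mp hi with h1 | h1
      · exact Or.inl h1
      · exact Or.inr (by linarith)
    have hhi' : ∀ᶠ i in (hyperfilter ℕ : Filter ℕ),
        s (b i) (x i) - s (a i) (x i) < ε := by
      have : (Germ.ofFun (fun i => s (b i) (x i) - s (a i) (x i)) : ℝ*) <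
          Germ.ofFun (fun _ => ε) := hhi
      exact hyp_lt_iff.mp this
    have hlo' : ∀ᶠ i in (hyperfilter ℕ : Filter ℕ),
        -ε < s (b i) (x i) - s (a i) (x i) := by
      have : (Germ.ofFun (fun _ => -ε) : ℝ*) <
          Germ.ofFun (fun i => s (b i) (x i) - s (a i) (x i)) := hlo
      exact hyp_lt_iff.mp this
    rcases hor with hc | hc
    · obtain ⟨i, h1, h2⟩ := (hc.and hhi').exists
      linarith
    · obtain ⟨i, h1, h2⟩ := (hc.and hlo').exists
      linarith
end
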